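/- Let f : (ℝ^d)^{n−1} × ℝ^d → ℝ be in F_n(C,ε), even in the last variable for each fixed first argument and such that g^y : x ↦ f(x,y) is even and in F_{n−1}(C,ε) for every y ∈ ℝ^d. Define φ : ℝ^d → ℝ by e^{−φ(y)} = E[e^{−f(X̃, y)}] where X̃ is a standard Gaussian vector on (ℝ^d)^{n−1}. If E[e^{−g^y(X̃)}] · E[e^{H(g^y)(X̃)}] ≤ A for every y ∈ ℝ^d, then for every y ∈ ℝ^d, E[e^{Hf(X̃, y)}] ≤ e^{Hφ(y)} · A. -/

import Mathlib

open MeasureTheory Real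

/-- The standard Gaussian probability measure on `ℝ^d`. -/
noncomputable def stdGauss (d : ℕ) : Measure (EuclideanSpace ℝ (Fin d)) :=
  volume.withDensity fun x =>
    ENNReal.ofReal ((2 * π) ^ (-(d : ℝ) / 2) * Real.exp (-‖x‖ ^ 2 / 2))

/-- The quadratic infimum convolution `Hψ(x) = inf_y ( ψ(x+y) + |y|²/2 )`. -/
noncomputable def Hconv {E : Type*} [NormedAddCommGroup E] (ψ : E → ℝ) (x : E) : ℝ :=
  ⨅ y : E, (ψ (x + y) + ‖y‖ ^ 2 / 2)

/-- The quadratic infimum convolution on `(ℝ^d)^m ≅ ℝ^{md}`. -/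
noncomputable def Hn {d m : ℕ} (g : (Fin m → EuclideanSpace ℝ (Fin d)) → ℝ)
    (x : Fin m → EuclideanSpace ℝ (Fin d)) : ℝ :=
  ⨅ w : Fin m → EuclideanSpace ℝ (Fin d), (g (x + w) + (∑ i, ‖w i‖ ^ 2) / 2)

/-- The quadratic infimum convolution on the full product `(ℝ^d)^m × ℝ^d`:
`Hf(x,y) = inf_{(u,v)} ( f(x+u, y+v) + ½(∑|uᵢ|² + |v|²) )`. -/
noncomputable def H2n {d m : ℕ}
    (f : (Fin m → EuclideanSpace ℝ (Fin d)) → EuclideanSpace ℝ (Fin d) → ℝ)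
    (x : Fin m → EuclideanSpace ℝ (Fin d)) (y : EuclideanSpace ℝ (Fin d)) : ℝ :=
  ⨅ p : (Fin m → EuclideanSpace ℝ (Fin d)) × EuclideanSpace ℝ (Fin d),
    (f (x + p.1) (y + p.2) + ((∑ i, ‖p.1 i‖ ^ 2) + ‖p.2‖ ^ 2) / 2)

/-- The class `F(C,ε)`: functions that are `Cε`-Lipschitz and satisfy
`f(x+h) + f(x-h) - 2f(x) ≤ Cε²|h|²` for all `x, h`. -/
def memF {E : Type*} [NormedAddCommGroup E] (C ε : ℝ) (f : E → ℝ) : Prop :=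
  LipschitzWith (C * ε).toNNReal f ∧
    ∀ x h : E, f (x + h) + f (x - h) - 2 * f x ≤ C * ε ^ 2 * ‖h‖ ^ 2

/-- The class `F_m(C,ε)` of functions on `(ℝ^d)^m`: functions belonging to `F(C,ε)`
with respect to each `ℝ^d`-coordinate block separately. -/
def memFn {d m : ℕ} (C ε : ℝ) (f : (Fin m → EuclideanSpace ℝ (Fin d)) → ℝ) : Prop :=
  ∀ (i : Fin m) (x : Fin m → EuclideanSpace ℝ (Fin d)),
    memF C ε fun y => f (Function.update x i y)

section Aux

variable {d m : ℕ}

local notation "Ed" => EuclideanSpace ℝ (Fin d)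

lemma integrable_rexp_neg_mul_sq_norm {b : ℝ} (hb : 0 < b) :
    Integrable (fun v : Ed => Real.exp (-b * ‖v‖ ^ 2)) := by
  have h := (GaussianFourier.integrable_cexp_neg_mul_sq_norm_add_of_euclideanSpace
      (b := (b : ℂ)) (by simpa using hb) 0 (0 : Ed)).norm
  convert h using 2 with v
  rw [Complex.norm_exp]
  norm_cast
  simp [Complex.mul_re]

lemma gaussDensity_cont :
    Continuous fun x : Ed => (2 * π) ^ (-(d : ℝ) / 2) * Real.exp (-‖x‖ ^ 2 / 2) := by
  refine continuous_const.mul (Real.continuous_exp.comp ?_)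
  exact ((continuous_norm.pow 2).neg).div_const 2

lemma gaussDensity_pos (x : Ed) :
    0 < (2 * π) ^ (-(d : ℝ) / 2) * Real.exp (-‖x‖ ^ 2 / 2) := by
  have : (0:ℝ) < 2 * π := by positivity
  positivity

lemma integrable_gaussDensity :
    Integrable (fun x : Ed => (2 * π) ^ (-(d : ℝ) / 2) * Real.exp (-‖x‖ ^ 2 / 2)) := by
  have h := (integrable_rexp_neg_mul_sq_norm (d := d) (b := 1/2) (by norm_num)).const_mul
    ((2 * π) ^ (-(d : ℝ) / 2))
  convert h using 2 with v
  ring_nf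

instance stdGauss_finite (d : ℕ) : IsFiniteMeasure (stdGauss d) := by
  unfold stdGauss
  exact isFiniteMeasure_withDensity_ofReal integrable_gaussDensity.hasFiniteIntegral

instance stdGauss_neZero (d : ℕ) : NeZero (stdGauss d) := by
  constructor
  rw [← Measure.measure_univ_ne_zero]
  unfold stdGauss
  rw [withDensity_apply _ MeasurableSet.univ, setLIntegral_univ]
  intro h
  rw [lintegral_eq_zero_iff (gaussDensity_cont.measurable.ennreal_ofReal)] at h
  have h' : volume {x : EuclideanSpace ℝ (Fin d) | ¬ (ENNReal.ofReal
      ((2 * π) ^ (-(d : ℝ) / 2) * Real.exp (-‖x‖ ^ 2 / 2)) = (0 : ENNReal))} = 0 := by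
    rw [Filter.EventuallyEq, ae_iff] at h
    simpa using h
  have h3 : volume (Set.univ : Set (EuclideanSpace ℝ (Fin d))) = 0 := by
    refine measure_mono_null (fun x _ => ?_) h'
    simp only [Set.mem_setOf_eq, ENNReal.ofReal_eq_zero, not_le]
    exact gaussDensity_pos (d := d) x
  exact (NeZero.ne (volume : Measure (EuclideanSpace ℝ (Fin d)))) (Measure.measure_univ_eq_zero.mp h3)

lemma pi_stdGauss_neZero (d m : ℕ) : NeZero (Measure.pi fun _ : Fin m => stdGauss d) := by
  constructor
  rw [← Measure.measure_univ_ne_zero, Measure.pi_univ]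
  refine Finset.prod_ne_zero_iff.mpr fun i _ => ?_
  exact Measure.measure_univ_ne_zero.mpr (NeZero.ne _)

/-- Product of integrable functions of coordinates is integrable w.r.t. a pi measure. -/
theorem my_pi_prod {n : ℕ} {E : Type*} [MeasurableSpace E]
    (μ : Measure E) [SigmaFinite μ] {f : Fin n → E → ℝ} (hf : ∀ i, Integrable (f i) μ) :
    Integrable (fun x : Fin n → E => ∏ i, f i (x i)) (Measure.pi fun _ => μ) := by
  induction n with
  | zero =>
      simp only [Finset.univ_eq_empty, Finset.prod_empty]
      have : (Measure.pi fun _ : Fin 0 => μ) Set.univ = 1 := by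
        rw [Measure.pi_univ]; simp
      rw [integrable_const_iff]
      right; exact ⟨by rw [this]; exact ENNReal.one_lt_top⟩
  | succ n ih =>
      have h := ((measurePreserving_piFinSuccAbove (fun _ : Fin (n+1) => μ) 0).symm)
      rw [← h.integrable_comp_emb (MeasurableEquiv.measurableEmbedding _)]
      simp_rw [MeasurableEquiv.piFinSuccAbove_symm_apply, Fin.insertNthEquiv,
        Fin.prod_univ_succ, Fin.insertNth_zero]
      simp only [Fin.zero_succAbove, Function.comp_def, Fin.cons_zero, Fin.cons_succ]
      exact Integrable.mul_prod (hf 0) (ih fun i => hf _)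

/-- `exp (c‖·‖)` is integrable w.r.t. the standard Gaussian. -/
lemma integrable_exp_norm_stdGauss (c : ℝ) :
    Integrable (fun x : Ed => Real.exp (c * ‖x‖)) (stdGauss d) := by
  unfold stdGauss
  rw [integrable_withDensity_iff (gaussDensity_cont.measurable.ennreal_ofReal)
    (Filter.Eventually.of_forall fun _ => ENNReal.ofReal_lt_top)]
  have hpos : ∀ x : Ed, 0 ≤ (2 * π) ^ (-(d : ℝ) / 2) * Real.exp (-‖x‖ ^ 2 / 2) :=
    fun x => (gaussDensity_pos x).le
  simp_rw [ENNReal.toReal_ofReal (hpos _)]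
  have hint := (integrable_rexp_neg_mul_sq_norm (d := d) (b := 1/4) (by norm_num)).const_mul
    (Real.exp (c ^ 2) * (2 * π) ^ (-(d : ℝ) / 2))
  refine Integrable.mono' hint ?_ (Filter.Eventually.of_forall fun x => ?_)
  · exact ((Real.continuous_exp.comp (continuous_const.mul continuous_norm)).mul
      gaussDensity_cont).aestronglyMeasurable
  · have h1 : 0 ≤ Real.exp (c * ‖x‖) * ((2 * π) ^ (-(d : ℝ) / 2) * Real.exp (-‖x‖ ^ 2 / 2)) := by
      have := hpos x; positivity
    rw [Real.norm_eq_abs, abs_of_nonneg h1]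
    have h2 : Real.exp (c * ‖x‖) * Real.exp (-‖x‖ ^ 2 / 2) ≤
        Real.exp (c ^ 2) * Real.exp (-(1/4) * ‖x‖ ^ 2) := by
      rw [← Real.exp_add, ← Real.exp_add]
      refine Real.exp_le_exp.mpr ?_
      nlinarith [sq_nonneg (c - ‖x‖ / 2), norm_nonneg x]
    have h3 : (0:ℝ) ≤ (2 * π) ^ (-(d : ℝ) / 2) := by
      have : (0:ℝ) < 2 * π := by positivity
      positivity
    calc Real.exp (c * ‖x‖) * ((2 * π) ^ (-(d : ℝ) / 2) * Real.exp (-‖x‖ ^ 2 / 2))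
        = (Real.exp (c * ‖x‖) * Real.exp (-‖x‖ ^ 2 / 2)) * (2 * π) ^ (-(d : ℝ) / 2) := by ring
      _ ≤ (Real.exp (c ^ 2) * Real.exp (-(1/4) * ‖x‖ ^ 2)) * (2 * π) ^ (-(d : ℝ) / 2) :=
          mul_le_mul_of_nonneg_right h2 h3
      _ = Real.exp (c ^ 2) * (2 * π) ^ (-(d : ℝ) / 2) * Real.exp (-(1/4) * ‖x‖ ^ 2) := by ring

lemma integrable_exp_sum_norm (c : ℝ) :
    Integrable (fun x : Fin m → Ed => Real.exp (c * ∑ i, ‖x i‖))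
      (Measure.pi fun _ : Fin m => stdGauss d) := by
  simp_rw [Finset.mul_sum, Real.exp_sum]
  exact my_pi_prod (stdGauss d) fun i => integrable_exp_norm_stdGauss c

/-- Coordinatewise Lipschitz implies the global sum bound. -/
lemma memFn.abs_sub_le {C ε : ℝ} (hCε : 0 ≤ C * ε) {g : (Fin m → Ed) → ℝ}
    (hg : memFn C ε g) (x z : Fin m → Ed) :
    |g x - g z| ≤ C * ε * ∑ i, ‖x i - z i‖ := by
  have key : ∀ s : Finset (Fin m), ∀ x z : Fin m → Ed, (∀ i ∉ s, x i = z i) →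
      |g x - g z| ≤ C * ε * ∑ i ∈ s, ‖x i - z i‖ := by
    intro s
    induction s using Finset.induction with
    | empty =>
        intro x z h
        have : x = z := funext fun i => h i (by simp)
        simp [this]
    | @insert j s hj ih =>
        intro x z h
        set x' := Function.update x j (z j) with hx'
        have h1 : |g x - g x'| ≤ C * ε * ‖x j - z j‖ := by
          have hl := (hg j x).1.dist_le_mul (x j) (z j)
          rw [Real.coe_toNNReal _ hCε] at hl
          simpa [Function.update_eq_self, Real.dist_eq, dist_eq_norm] using hl
        have h2 : ∀ i ∉ s, x' i = z i := by
          intro i hi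
          by_cases hij : i = j
          · subst hij; simp [hx']
          · rw [hx', Function.update_of_ne hij]
            exact h i (by simp [hij, hi])
        have h3 := ih x' z h2
        have h4 : ∑ i ∈ s, ‖x' i - z i‖ = ∑ i ∈ s, ‖x i - z i‖ := by
          refine Finset.sum_congr rfl fun i hi => ?_
          rw [hx', Function.update_of_ne (by rintro rfl; exact hj hi)]
        rw [h4] at h3
        rw [Finset.sum_insert hj]
        calc |g x - g z| ≤ |g x - g x'| + |g x' - g z| := _root_.abs_sub_le _ _ _
          _ ≤ C * ε * ‖x j - z j‖ + C * ε * ∑ i ∈ s, ‖x i - z i‖ := add_le_add h1 h3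
          _ = C * ε * (‖x j - z j‖ + ∑ i ∈ s, ‖x i - z i‖) := by ring
  simpa using key Finset.univ x z (fun i hi => absurd (Finset.mem_univ i) hi)

lemma sum_norm_sub_le (x z : Fin m → Ed) : ∑ i, ‖x i - z i‖ ≤ m * dist x z := by
  have h : ∀ i ∈ Finset.univ, ‖x i - z i‖ ≤ dist x z := fun i _ => by
    rw [dist_eq_norm]
    simpa using norm_le_pi_norm (x - z) i
  calc ∑ i, ‖x i - z i‖ ≤ Finset.univ.card • dist x z := Finset.sum_le_card_nsmul _ _ _ h
    _ = m * dist x z := by simp [Finset.card_univ, nsmul_eq_mul]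

lemma continuous_of_coordLip {L : ℝ} (hL : 0 ≤ L) {g : (Fin m → Ed) → ℝ}
    (h : ∀ x z, |g x - g z| ≤ L * ∑ i, ‖x i - z i‖) : Continuous g := by
  refine LipschitzWith.continuous (K := (L * m).toNNReal) (LipschitzWith.of_dist_le_mul ?_)
  intro x z
  rw [Real.dist_eq, Real.coe_toNNReal _ (by positivity)]
  calc |g x - g z| ≤ L * ∑ i, ‖x i - z i‖ := h x z
    _ ≤ L * (m * dist x z) := mul_le_mul_of_nonneg_left (sum_norm_sub_le x z) hL
    _ = L * m * dist x z := by ring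

lemma quad_bound (L t : ℝ) : L * t ≤ t ^ 2 / 2 + L ^ 2 / 2 := by nlinarith [sq_nonneg (t - L)]

lemma sum_quad (L : ℝ) (u : Fin m → Ed) :
    L * ∑ i, ‖u i‖ ≤ (∑ i, ‖u i‖ ^ 2) / 2 + m * (L ^ 2 / 2) := by
  rw [Finset.mul_sum]
  calc ∑ i, L * ‖u i‖ ≤ ∑ i : Fin m, (‖u i‖ ^ 2 / 2 + L ^ 2 / 2) :=
        Finset.sum_le_sum fun i _ => quad_bound L ‖u i‖
    _ = (∑ i, ‖u i‖ ^ 2) / 2 + m * (L ^ 2 / 2) := by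
        rw [Finset.sum_add_distrib, ← Finset.sum_div, Finset.sum_const, Finset.card_univ]
        simp [nsmul_eq_mul]

/-- Master integrability lemma: `exp ∘ g` integrable for `g` continuous with linear growth. -/
lemma integrable_exp_of_le {g : (Fin m → Ed) → ℝ} (hgc : Continuous g) (b c : ℝ)
    (hb : ∀ x, g x ≤ b + c * ∑ i, ‖x i‖) :
    Integrable (fun x => Real.exp (g x)) (Measure.pi fun _ : Fin m => stdGauss d) := by
  refine Integrable.mono' ((integrable_exp_sum_norm c).const_mul (Real.exp b))
    (Real.continuous_exp.comp hgc).aestronglyMeasurable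
    (Filter.Eventually.of_forall fun x => ?_)
  rw [Real.norm_eq_abs, Real.abs_exp, ← Real.exp_add]
  exact Real.exp_le_exp.mpr (hb x)

end Aux

/-- The key step of the tensorisation: with `f ∈ F_n(C,ε)` on `(ℝ^d)^{n-1} × ℝ^d`
(here `m = n − 1`), even in the last variable and with `g^y = f(·,y)` even, if
`φ` satisfies `e^{-φ(y)} = E[e^{-f(X̃,y)}]` and
`E[e^{-g^y(X̃)}] E[e^{H(g^y)(X̃)}] ≤ A` for every `y`, then
`E[e^{Hf(X̃,y)}] ≤ e^{Hφ(y)} A` for every `y`. -/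
theorem tensorisation_step (d m : ℕ) (C ε : ℝ) (hC : 0 < C)
    (hε : ε ∈ Set.Ioc (0 : ℝ) 1)
    (f : (Fin m → EuclideanSpace ℝ (Fin d)) → EuclideanSpace ℝ (Fin d) → ℝ)
    (hF1 : ∀ y, memFn C ε fun x => f x y)
    (hF2 : ∀ x, memF C ε (f x))
    (heven2 : ∀ x y, f x (-y) = f x y)
    (heven1 : ∀ x y, f (-x) y = f x y)
    (φ : EuclideanSpace ℝ (Fin d) → ℝ)
    (hφ : ∀ y, Real.exp (-φ y) =
      ∫ x, Real.exp (-f x y) ∂Measure.pi fun _ : Fin m => stdGauss d)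
    (A : ℝ)
    (hA : ∀ y,
      (∫ x, Real.exp (-f x y) ∂Measure.pi fun _ : Fin m => stdGauss d) *
        (∫ x, Real.exp (Hn (fun x' => f x' y) x)
          ∂Measure.pi fun _ : Fin m => stdGauss d) ≤ A) :
    ∀ y, (∫ x, Real.exp (H2n f x y) ∂Measure.pi fun _ : Fin m => stdGauss d) ≤
      Real.exp (Hconv φ y) * A := by
  haveI := pi_stdGauss_neZero d m
  have hε0 : (0:ℝ) < ε := hε.1
  set L : ℝ := C * ε with hLdef
  have hL : 0 < L := mul_pos hC hε0
  -- coordinatewise Lipschitz bound in x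
  have habs : ∀ (y' : EuclideanSpace ℝ (Fin d)) (x z : Fin m → EuclideanSpace ℝ (Fin d)),
      |f x y' - f z y'| ≤ L * ∑ i, ‖x i - z i‖ := fun y' x z =>
    memFn.abs_sub_le hL.le (hF1 y') x z
  -- Lipschitz bound in y
  have hy : ∀ (x : Fin m → EuclideanSpace ℝ (Fin d)) (y₁ y₂ : EuclideanSpace ℝ (Fin d)),
      |f x y₁ - f x y₂| ≤ L * ‖y₁ - y₂‖ := by
    intro x y₁ y₂
    have hl := (hF2 x).1.dist_le_mul y₁ y₂
    rw [Real.coe_toNNReal _ hL.le] at hl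
    simpa [Real.dist_eq, dist_eq_norm] using hl
  -- bddBelow for Hn
  have hn_bdd : ∀ (y' : EuclideanSpace ℝ (Fin d)) (x : Fin m → EuclideanSpace ℝ (Fin d)),
      BddBelow (Set.range fun w : Fin m → EuclideanSpace ℝ (Fin d) =>
        f (x + w) y' + (∑ i, ‖w i‖ ^ 2) / 2) := by
    intro y' x
    refine ⟨f x y' - m * (L ^ 2 / 2), ?_⟩
    rintro t ⟨w, rfl⟩
    have h1 := habs y' (x + w) x
    simp only [Pi.add_apply, add_sub_cancel_left] at h1
    have h2 := sum_quad L w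
    have h3 := (abs_sub_le_iff.mp h1).2
    linarith
  -- bddBelow for H2n
  have h2n_bdd : ∀ (y' : EuclideanSpace ℝ (Fin d)) (x : Fin m → EuclideanSpace ℝ (Fin d)),
      BddBelow (Set.range fun p : (Fin m → EuclideanSpace ℝ (Fin d)) × EuclideanSpace ℝ (Fin d) =>
        f (x + p.1) (y' + p.2) + ((∑ i, ‖p.1 i‖ ^ 2) + ‖p.2‖ ^ 2) / 2) := by
    intro y' x
    refine ⟨f x y' - m * (L ^ 2 / 2) - L ^ 2 / 2, ?_⟩
    rintro t ⟨⟨u, v⟩, rfl⟩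
    have h1 := habs (y' + v) (x + u) x
    simp only [Pi.add_apply, add_sub_cancel_left] at h1
    have h2 := hy x (y' + v) y'
    rw [add_sub_cancel_left] at h2
    have h3 := sum_quad L u
    have h4 := quad_bound L ‖v‖
    have h5 := (abs_sub_le_iff.mp h1).2
    have h6 := (abs_sub_le_iff.mp h2).2
    dsimp only
    linarith
  -- Hn g ≤ g
  have hn_le : ∀ (y' : EuclideanSpace ℝ (Fin d)) (x : Fin m → EuclideanSpace ℝ (Fin d)),
      Hn (fun x' => f x' y') x ≤ f x y' := by
    intro y' x
    have h := ciInf_le (hn_bdd y' x) 0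
    have h' : Hn (fun x' => f x' y') x ≤ f (x + 0) y' + (∑ i, ‖(0 : Fin m → EuclideanSpace ℝ (Fin d)) i‖ ^ 2) / 2 := h
    simpa using h'
  -- Hn Lipschitz
  have hn_lip : ∀ (y' : EuclideanSpace ℝ (Fin d)) (x z : Fin m → EuclideanSpace ℝ (Fin d)),
      Hn (fun x' => f x' y') x ≤ Hn (fun x' => f x' y') z + L * ∑ i, ‖x i - z i‖ := by
    intro y' x z
    have h1 : ∀ w, Hn (fun x' => f x' y') x - L * ∑ i, ‖x i - z i‖ ≤
        f (z + w) y' + (∑ i, ‖w i‖ ^ 2) / 2 := by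
      intro w
      have h2 : Hn (fun x' => f x' y') x ≤ f (x + w) y' + (∑ i, ‖w i‖ ^ 2) / 2 :=
        ciInf_le (hn_bdd y' x) w
      have h3 := habs y' (x + w) (z + w)
      have h4 : ∀ i, (x + w) i - (z + w) i = x i - z i := fun i => by
        simp [add_sub_add_right_eq_sub]
      rw [Finset.sum_congr rfl fun i _ => by rw [h4 i]] at h3
      have h5 := (abs_sub_le_iff.mp h3).1
      linarith
    have h6 : Hn (fun x' => f x' y') x - L * ∑ i, ‖x i - z i‖ ≤ Hn (fun x' => f x' y') z :=
      le_ciInf h1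
    linarith
  have hn_cont : ∀ y' : EuclideanSpace ℝ (Fin d),
      Continuous (Hn (fun x' => f x' y')) := by
    intro y'
    refine continuous_of_coordLip hL.le fun x z => ?_
    rw [abs_sub_le_iff]
    constructor
    · linarith [hn_lip y' x z]
    · have hzx := hn_lip y' z x
      have hsum : ∑ i, ‖z i - x i‖ = ∑ i, ‖x i - z i‖ :=
        Finset.sum_congr rfl fun i _ => norm_sub_rev _ _
      rw [hsum] at hzx
      linarith
  -- integrability of exp (Hn g)
  have int_hn : ∀ y' : EuclideanSpace ℝ (Fin d),
      Integrable (fun x => Real.exp (Hn (fun x' => f x' y') x))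
        (Measure.pi fun _ : Fin m => stdGauss d) := by
    intro y'
    refine integrable_exp_of_le (hn_cont y') (f 0 y') L fun x => ?_
    refine (hn_le y' x).trans ?_
    have h1 := (abs_sub_le_iff.mp (habs y' x 0)).1
    have hsum : ∑ i, ‖x i - (0 : Fin m → EuclideanSpace ℝ (Fin d)) i‖ = ∑ i, ‖x i‖ := by
      simp
    rw [hsum] at h1
    linarith
  -- integrability of exp (-f · y')
  have int_negf : ∀ y' : EuclideanSpace ℝ (Fin d),
      Integrable (fun x => Real.exp (-f x y'))
        (Measure.pi fun _ : Fin m => stdGauss d) := by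
    intro y'
    have hc : Continuous fun x : Fin m → EuclideanSpace ℝ (Fin d) => -f x y' := by
      refine continuous_of_coordLip hL.le fun x z => ?_
      have heq : |-f x y' - -f z y'| = |f x y' - f z y'| := by
        rw [neg_sub_neg, abs_sub_comm]
      rw [heq]
      exact habs y' x z
    refine integrable_exp_of_le hc (-f 0 y') L fun x => ?_
    have h1 := (abs_sub_le_iff.mp (habs y' 0 x)).1
    simp only [Pi.zero_apply, zero_sub, norm_neg] at h1
    linarith
  -- positivity of A
  have hA_pos : 0 < A := by
    refine lt_of_lt_of_le ?_ (hA 0)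
    refine mul_pos ?_ (integral_exp_pos (int_hn 0))
    rw [← hφ 0]
    exact Real.exp_pos _
  intro y
  -- the pointwise inequality
  have hpoint : ∀ (v : EuclideanSpace ℝ (Fin d)) (x : Fin m → EuclideanSpace ℝ (Fin d)),
      H2n f x y ≤ Hn (fun x' => f x' (y + v)) x + ‖v‖ ^ 2 / 2 := by
    intro v x
    have h1 : ∀ u, H2n f x y - ‖v‖ ^ 2 / 2 ≤
        f (x + u) (y + v) + (∑ i, ‖u i‖ ^ 2) / 2 := by
      intro u
      have h2 : H2n f x y ≤ f (x + u) (y + v) + ((∑ i, ‖u i‖ ^ 2) + ‖v‖ ^ 2) / 2 :=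
        ciInf_le (h2n_bdd y x) (u, v)
      linarith
    have h6 : H2n f x y - ‖v‖ ^ 2 / 2 ≤ Hn (fun x' => f x' (y + v)) x := le_ciInf h1
    linarith
  -- claim 1
  have claim1 : ∀ v : EuclideanSpace ℝ (Fin d),
      (∫ x, Real.exp (H2n f x y) ∂Measure.pi fun _ : Fin m => stdGauss d) ≤
        Real.exp (φ (y + v) + ‖v‖ ^ 2 / 2) * A := by
    intro v
    have hint := int_hn (y + v)
    have step1 : (∫ x, Real.exp (H2n f x y) ∂Measure.pi fun _ : Fin m => stdGauss d) ≤
        Real.exp (‖v‖ ^ 2 / 2) *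
          ∫ x, Real.exp (Hn (fun x' => f x' (y + v)) x)
            ∂Measure.pi fun _ : Fin m => stdGauss d := by
      rw [← integral_const_mul]
      refine integral_mono_of_nonneg (Filter.Eventually.of_forall fun x => (Real.exp_pos _).le)
        (hint.const_mul _) (Filter.Eventually.of_forall fun x => ?_)
      dsimp only
      rw [← Real.exp_add]
      exact Real.exp_le_exp.mpr (by linarith [hpoint v x])
    have step2 : (∫ x, Real.exp (Hn (fun x' => f x' (y + v)) x)
        ∂Measure.pi fun _ : Fin m => stdGauss d) ≤ Real.exp (φ (y + v)) * A := by
      have h := hA (y + v)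
      rw [← hφ (y + v)] at h
      have hpos := Real.exp_pos (-φ (y + v))
      have := mul_le_mul_of_nonneg_left h (Real.exp_pos (φ (y + v))).le
      calc (∫ x, Real.exp (Hn (fun x' => f x' (y + v)) x)
            ∂Measure.pi fun _ : Fin m => stdGauss d)
          = Real.exp (φ (y + v)) * (Real.exp (-φ (y + v)) *
            ∫ x, Real.exp (Hn (fun x' => f x' (y + v)) x)
              ∂Measure.pi fun _ : Fin m => stdGauss d) := by
            rw [← mul_assoc, ← Real.exp_add]
            simp
        _ ≤ Real.exp (φ (y + v)) * A := this
    calc (∫ x, Real.exp (H2n f x y) ∂Measure.pi fun _ : Fin m => stdGauss d)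
        ≤ Real.exp (‖v‖ ^ 2 / 2) * (Real.exp (φ (y + v)) * A) :=
          step1.trans (mul_le_mul_of_nonneg_left step2 (Real.exp_pos _).le)
      _ = Real.exp (φ (y + v) + ‖v‖ ^ 2 / 2) * A := by rw [Real.exp_add]; ring
  -- conclusion
  have hnn : 0 ≤ ∫ x, Real.exp (H2n f x y) ∂Measure.pi fun _ : Fin m => stdGauss d :=
    integral_nonneg fun x => (Real.exp_pos _).le
  rcases eq_or_lt_of_le hnn with h0 | hpos
  · rw [← h0]
    positivity
  · set I := ∫ x, Real.exp (H2n f x y) ∂Measure.pi fun _ : Fin m => stdGauss d with hI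
    have hdiv : 0 < I / A := div_pos hpos hA_pos
    have hlog : Real.log (I / A) ≤ Hconv φ y := by
      rw [Hconv]
      refine le_ciInf fun v => ?_
      rw [Real.log_le_iff_le_exp hdiv, div_le_iff₀ hA_pos]
      exact claim1 v
    have h1 : I / A ≤ Real.exp (Hconv φ y) := by
      calc I / A = Real.exp (Real.log (I / A)) := (Real.exp_log hdiv).symm
        _ ≤ Real.exp (Hconv φ y) := Real.exp_le_exp.mpr hlog
    calc I = I / A * A := by field_simp
      _ ≤ Real.exp (Hconv φ y) * A := mul_le_mul_of_nonneg_right h1 hA_pos.le
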